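/- Let D be a discriminant form of even signature and H an isotropic subgroup. The isotropic lift ↑_H^D: C[H^⊥/H] → C[D], defined by ↑_H^D(e^{γ+H}) = Σ_{μ∈H} e^{γ+μ} for γ ∈ H^⊥, intertwines the Weil representations: ↑_H^D ∘ ρ_{H^⊥/H}(M) = ρ_D(M) ∘ ↑_H^D for all M ∈ SL_2(Z). In particular ↑_H^D maps invariants to invariants. -/

import Mathlib

open scoped Classical

/-- `e(x) = exp(2πix)`; it only depends on `x` modulo 1. -/
noncomputable def e (x : ℚ) : ℂ := Complex.exp (2 * Real.pi * Complex.I * (x : ℂ))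

/-- A discriminant form structure on a finite abelian group `D`: a function
`q : D → ℚ` representing a quadratic form `D → ℚ/ℤ` (all identities hold modulo 1)
whose associated bilinear form `b(β,γ) = q(β+γ) - q(β) - q(γ) mod 1` is
nondegenerate. -/
structure IsDiscForm (D : Type*) [AddCommGroup D] [Fintype D] (q : D → ℚ) : Prop where
  quad : ∀ (n : ℤ) (γ : D), ∃ k : ℤ, q (n • γ) - (n : ℚ) ^ 2 * q γ = (k : ℚ)
  bilin : ∀ α β γ : D, ∃ k : ℤ,
    (q (α + β + γ) - q (α + β) - q γ) - (q (α + γ) - q α - q γ)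
      - (q (β + γ) - q β - q γ) = (k : ℚ)
  nondeg : ∀ γ : D, (∀ β : D, ∃ k : ℤ, q (γ + β) - q γ - q β = (k : ℚ)) → γ = 0

/-- The orthogonal complement `H^⊥` of a subgroup `H` of a discriminant form `(D, q)`:
the elements pairing integrally with every element of `H`. -/
def perpSet (D : Type*) [AddCommGroup D] (q : D → ℚ) (H : AddSubgroup D) : Set D :=
  {γ | ∀ h ∈ H, ∃ k : ℤ, q (γ + h) - q γ - q h = (k : ℚ)}

/-- the isotropic lift `↑_H^D : ℂ[H^⊥/H] → ℂ[D]` intertwines the Weil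
representations of `H^⊥/H` and `D` (it suffices to check this on the generators `T`
and `S` of `SL₂(ℤ)`).  An element of `ℂ[H^⊥/H]` is encoded by an `H`-periodic
function `w` on `D` supported on `H^⊥` (its coefficient on the coset `γ + H` being
`w γ`); under this encoding `↑_H^D(w̄) = Σ_{γ+H} w(γ) Σ_{μ∈H} e^{γ+μ}` is the function
`γ ↦ if γ ∈ H^⊥ then w γ else 0`, the Weil representation of `H^⊥/H` uses the same
`σ = e(sign(D)/8)` (same signature), `|H^⊥/H| = |D|/|H|²`, and the sum over `H^⊥/H`
is `(1/|H|)` times the sum over `H^⊥`. -/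


lemma e_add (x y : ℚ) : e (x + y) = e x * e y := by
  simp only [e, ← Complex.exp_add]
  push_cast
  ring_nf

lemma e_int (k : ℤ) : e k = 1 := by
  have : ((k : ℚ) : ℂ) = (k : ℂ) := by push_cast; ring
  rw [e, this,
    show (2 * Real.pi * Complex.I * (k:ℂ) : ℂ) = (k:ℂ) * (2 * Real.pi * Complex.I) by ring]
  exact Complex.exp_int_mul_two_pi_mul_I k

lemma e_ne_one {x : ℚ} (h : ∀ k : ℤ, x ≠ (k:ℚ)) : e x ≠ 1 := by
  intro h1
  rw [e, Complex.exp_eq_one_iff] at h1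
  obtain ⟨n, hn⟩ := h1
  have h2pi : (2 * Real.pi * Complex.I : ℂ) ≠ 0 := by
    simp [Real.pi_ne_zero, Complex.I_ne_zero]
  have h2 : (x : ℂ) = (n : ℂ) := by
    rw [show (n:ℂ) * (2 * Real.pi * Complex.I) = 2 * Real.pi * Complex.I * (n:ℂ) by ring] at hn
    exact mul_left_cancel₀ h2pi hn
  exact h n (by exact_mod_cast h2)

theorem isotropic_lift_intertwines
    (D : Type) [AddCommGroup D] [Fintype D] (q : D → ℚ) (hD : IsDiscForm D q)
    (σ : ℂ)
    (hMilgram : ∑ γ : D, e (q γ) = (Real.sqrt (Fintype.card D) : ℂ) * σ)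
    (hEvenSig : σ ^ 4 = 1)
    (H : AddSubgroup D) (hH : ∀ h ∈ H, ∃ k : ℤ, q h = (k : ℚ))
    (w : D → ℂ)
    (hsupp : ∀ γ : D, γ ∉ perpSet D q H → w γ = 0)
    (hper : ∀ γ : D, ∀ h ∈ H, w (γ + h) = w γ) :
    (∀ γ : D,
      (if γ ∈ perpSet D q H then e (-(q γ)) * w γ else 0) = e (-(q γ)) * w γ)
    ∧ (∀ γ : D,
      (if γ ∈ perpSet D q H then
        (σ / (Real.sqrt ((Fintype.card D : ℝ) / (Nat.card H : ℝ) ^ 2) : ℂ)) *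
          ((Nat.card H : ℂ)⁻¹ *
            ∑ β : D, (if β ∈ perpSet D q H then e (q (γ + β) - q γ - q β) * w β else 0))
       else 0)
      = (σ / (Real.sqrt (Fintype.card D) : ℂ)) *
          ∑ β : D, e (q (γ + β) - q γ - q β) * w β) := by
  classical
  -- membership in perpSet
  have hmem : ∀ γ : D, γ ∈ perpSet D q H ↔
      ∀ h ∈ H, ∃ k : ℤ, q (γ + h) - q γ - q h = (k : ℚ) := by
    intro γ; rfl
  -- bilinearity in the second argument
  have bilin2 : ∀ γ β h : D, ∃ k : ℤ,
      (q (γ + (β + h)) - q γ - q (β + h)) - (q (γ + β) - q γ - q β)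
        - (q (γ + h) - q γ - q h) = (k : ℚ) := by
    intro γ β h
    obtain ⟨k, hk⟩ := hD.bilin β h γ
    refine ⟨k, ?_⟩
    rw [add_comm γ (β + h), add_comm γ β, add_comm γ h]
    linarith [hk]
  -- perp is closed under adding elements of H
  have perp_add : ∀ β ∈ perpSet D q H, ∀ h ∈ H, β + h ∈ perpSet D q H := by
    intro β hβ h hh
    rw [hmem] at hβ ⊢
    intro h' hh'
    obtain ⟨k1, hk1⟩ := hβ h' hh'
    obtain ⟨a, ha⟩ := hH (h + h') (H.add_mem hh hh')
    obtain ⟨b, hb⟩ := hH h hh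
    obtain ⟨c, hc⟩ := hH h' hh'
    obtain ⟨k3, hk3⟩ := hD.bilin β h h'
    refine ⟨k3 + k1 + (a - b - c), ?_⟩
    push_cast
    linarith [hk3, hk1, ha, hb, hc]
  -- key character-sum vanishing
  have key : ∀ γ : D, γ ∉ perpSet D q H →
      (∑ β : D, if β ∈ perpSet D q H then e (q (γ + β) - q γ - q β) * w β else 0) = 0 := by
    intro γ hγ
    rw [hmem] at hγ
    push_neg at hγ
    obtain ⟨h, hhH, hk⟩ := hγ
    set c := e (q (γ + h) - q γ - q h) with hc
    set S := ∑ β : D, if β ∈ perpSet D q H then e (q (γ + β) - q γ - q β) * w β else 0 with hS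
    have hshift : S = c * S := by
      calc S = ∑ β : D, (if β + h ∈ perpSet D q H then
            e (q (γ + (β + h)) - q γ - q (β + h)) * w (β + h) else 0) :=
          Fintype.sum_equiv (Equiv.addRight h)
            (fun β => if β + h ∈ perpSet D q H then
              e (q (γ + (β + h)) - q γ - q (β + h)) * w (β + h) else 0)
            (fun β => if β ∈ perpSet D q H then e (q (γ + β) - q γ - q β) * w β else 0)
            (fun β => rfl) |>.symm
        _ = ∑ β : D, c * (if β ∈ perpSet D q H then
              e (q (γ + β) - q γ - q β) * w β else 0) := by
            refine Finset.sum_congr rfl fun β _ => ?_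
            by_cases hβ : β ∈ perpSet D q H
            · have hβh : β + h ∈ perpSet D q H := perp_add β hβ h hhH
              simp only [hβ, hβh, if_true]
              rw [hper β h hhH]
              obtain ⟨k, hkk⟩ := bilin2 γ β h
              have : q (γ + (β + h)) - q γ - q (β + h)
                  = (q (γ + h) - q γ - q h) + ((q (γ + β) - q γ - q β) + (k : ℚ)) := by
                linarith [hkk]
              rw [this, e_add, e_add, e_int, mul_one, ← hc]
              ring
            · have hβh : β + h ∉ perpSet D q H := by
                intro hmem'
                exact hβ (by simpa using perp_add _ hmem' (-h) (H.neg_mem hhH))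
              simp [hβ, hβh]
        _ = c * S := by rw [← Finset.mul_sum]
    have hcne : c ≠ 1 := e_ne_one hk
    have : (c - 1) * S = 0 := by
      rw [sub_mul, one_mul]
      exact sub_eq_zero.mpr hshift.symm
    rcases mul_eq_zero.mp this with h1 | h2
    · exact absurd (sub_eq_zero.mp h1) hcne
    · exact h2
  constructor
  · intro γ
    by_cases hγ : γ ∈ perpSet D q H
    · simp [hγ]
    · simp [hγ, hsupp γ hγ]
  · intro γ
    have hsum : (∑ β : D, e (q (γ + β) - q γ - q β) * w β)
        = ∑ β : D, if β ∈ perpSet D q H then e (q (γ + β) - q γ - q β) * w β else 0 := by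
      refine Finset.sum_congr rfl fun β _ => ?_
      by_cases hβ : β ∈ perpSet D q H
      · simp [hβ]
      · simp [hβ, hsupp β hβ]
    by_cases hγ : γ ∈ perpSet D q H
    · simp only [hγ, if_true]
      rw [hsum]
      have hcardH : (0 : ℝ) < (Nat.card H : ℝ) := by
        exact_mod_cast Nat.card_pos
      have hcardD : (0 : ℝ) < (Fintype.card D : ℝ) := by
        exact_mod_cast Fintype.card_pos
      have hsqrt : Real.sqrt ((Fintype.card D : ℝ) / (Nat.card H : ℝ) ^ 2)
          = Real.sqrt (Fintype.card D) / (Nat.card H : ℝ) := by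
        rw [Real.sqrt_div (by positivity), Real.sqrt_sq (le_of_lt hcardH)]
      rw [hsqrt]
      have hHne : ((Nat.card H : ℝ) : ℂ) ≠ 0 := by exact_mod_cast hcardH.ne'
      have hDne : ((Real.sqrt (Fintype.card D) : ℝ) : ℂ) ≠ 0 := by
        exact_mod_cast (Real.sqrt_pos.mpr hcardD).ne'
      push_cast
      field_simp
    · simp only [hγ, if_false]
      rw [hsum, key γ hγ, mul_zero]
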